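/- Let g : ℕ → ℂ be a function such that the series ∑_{q=1}^∞ |g(q)|²/φ(q) converges, where φ is Euler's totient function. Then ∑_{q<z} |g(q)|/(q · log*(z/q)) tends to 0 as z → ∞, where log*(t) = max(1, log t) and the sum runs over positive integers q with q < z. -/

import Mathlib

open Filter Finset

lemma my_amgm (t u p Q L : ℝ) (ht : 0 < t) (hu : 0 ≤ u) (hp : 0 < p) (hQ : 1 ≤ Q)
    (hL : 1 ≤ L) (hpQ : p ≤ Q) :
    u / (Q * L) ≤ t / 2 * (u ^ 2 / p) + 1 / (2 * t) * (1 / (Q * L ^ 2)) := by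
  have hQ0 : 0 < Q := by linarith
  have hL0 : 0 < L := by linarith
  have h1 : u / (Q * L) ≤ t / 2 * (u ^ 2 / p) + 1 / (2 * t) * (p / (Q ^ 2 * L ^ 2)) := by
    have e : t / 2 * (u ^ 2 / p) + 1 / (2 * t) * (p / (Q ^ 2 * L ^ 2)) - u / (Q * L)
        = (t * u * Q * L - p) ^ 2 / (2 * t * p * Q ^ 2 * L ^ 2) := by
      field_simp
      ring
    have h2 : 0 ≤ (t * u * Q * L - p) ^ 2 / (2 * t * p * Q ^ 2 * L ^ 2) := by positivity
    linarith [e, h2]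
  refine h1.trans ?_
  have h3 : p / (Q ^ 2 * L ^ 2) ≤ 1 / (Q * L ^ 2) := by
    rw [div_le_div_iff₀ (by positivity) (by positivity)]
    nlinarith [sq_nonneg L, mul_pos hQ0 (by positivity : (0:ℝ) < L^2)]
  gcongr

lemma my_term_le (z : ℝ) (q : ℕ) (hq : 1 ≤ q) (hqz : (q : ℝ) + 1 ≤ z) :
    1 / ((q : ℝ) * (max 1 (Real.log (z / q))) ^ 2)
      ≤ 8 * (1 / (1 + Real.log (z / ((q : ℝ) + 1))) - 1 / (1 + Real.log (z / q))) := by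
  have hq1 : (1 : ℝ) ≤ q := by exact_mod_cast hq
  have hq0 : (0 : ℝ) < q := by linarith
  have hz : (0 : ℝ) < z := by linarith
  set a := Real.log (z / q) with ha
  set b := Real.log (z / ((q : ℝ) + 1)) with hb
  have hb0 : 0 ≤ b := Real.log_nonneg (by rw [le_div_iff₀ (by linarith)]; linarith)
  have hba : b ≤ a := by
    apply Real.log_le_log (by positivity)
    apply div_le_div_of_nonneg_left hz.le hq0
    linarith
  have hdiff : 1 / (2 * (q : ℝ)) ≤ a - b := by
    have e1 : a - b = Real.log ((q : ℝ) + 1) - Real.log q := by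
      rw [ha, hb, Real.log_div (by positivity) (by positivity),
        Real.log_div (by positivity) (by positivity)]
      ring
    have e2 : Real.log ((q : ℝ) / ((q : ℝ) + 1)) ≤ (q : ℝ) / ((q : ℝ) + 1) - 1 :=
      Real.log_le_sub_one_of_pos (by positivity)
    have e3 : Real.log ((q : ℝ) / ((q : ℝ) + 1)) = Real.log q - Real.log ((q : ℝ) + 1) :=
      Real.log_div (by positivity) (by positivity)
    have e4 : (q : ℝ) / ((q : ℝ) + 1) - 1 = -(1 / ((q : ℝ) + 1)) := by
      field_simp
      ring
    have e5 : 1 / ((q : ℝ) + 1) ≤ Real.log ((q : ℝ) + 1) - Real.log q := by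
      rw [e3, e4] at e2; linarith
    have e6 : 1 / (2 * (q : ℝ)) ≤ 1 / ((q : ℝ) + 1) := by
      apply one_div_le_one_div_of_le (by linarith)
      linarith
    linarith
  set M := max 1 a with hM
  have hM1 : (1 : ℝ) ≤ M := le_max_left _ _
  have hMa : a ≤ M := le_max_right _ _
  have h2M : 1 + a ≤ 2 * M := by linarith
  have hM0 : 0 < M := by linarith
  have e1 : 1 / (1 + b) - 1 / (1 + a) = (a - b) / ((1 + b) * (1 + a)) := by
    rw [div_sub_div _ _ (by linarith : (1:ℝ) + b ≠ 0) (by linarith : (1:ℝ) + a ≠ 0)]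
    ring_nf
  have e2 : (1 / (2 * (q : ℝ))) / ((2 * M) * (2 * M)) ≤ (a - b) / ((1 + b) * (1 + a)) := by
    apply div_le_div₀ (by linarith) hdiff (by nlinarith) ?_
    nlinarith
  calc 1 / ((q : ℝ) * M ^ 2)
      = 8 * ((1 / (2 * (q : ℝ))) / ((2 * M) * (2 * M))) := by
        field_simp; ring
    _ ≤ 8 * ((a - b) / ((1 + b) * (1 + a))) := by linarith
    _ = 8 * (1 / (1 + b) - 1 / (1 + a)) := by rw [e1]

lemma my_harmonic_bound (z : ℝ) :
    ∑ q ∈ Finset.Ioo 0 ⌈z⌉₊, 1 / ((q : ℝ) * (max 1 (Real.log (z / q))) ^ 2) ≤ 10 := by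
  by_cases hn : ⌈z⌉₊ ≤ 1
  · have : Finset.Ioo 0 ⌈z⌉₊ = ∅ := by
      apply Finset.eq_empty_of_forall_notMem
      intro x hx
      simp only [Finset.mem_Ioo] at hx
      omega
    rw [this]
    norm_num
  · push_neg at hn
    set n := ⌈z⌉₊ with hndef
    set m := n - 1 with hmdef
    have hm1 : 1 ≤ m := by omega
    have hnm : n = m + 1 := by omega
    have hmz : (m : ℝ) < z := Nat.lt_ceil.mp (by omega)
    have hm1R : (1 : ℝ) ≤ m := by exact_mod_cast hm1
    have hz1 : (1 : ℝ) < z := lt_of_le_of_lt hm1R hmz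
    have hIoo : Finset.Ioo 0 n = Finset.Ico 1 n := by
      ext x; simp [Finset.mem_Ioo, Finset.mem_Ico]; omega
    rw [hIoo, hnm, Finset.sum_Ico_succ_top hm1]
    set H : ℕ → ℝ := fun q => 1 / (1 + Real.log (z / q)) with hH
    have hstep : ∀ q ∈ Finset.Ico 1 m,
        1 / ((q : ℝ) * (max 1 (Real.log (z / q))) ^ 2) ≤ 8 * (H (q + 1) - H q) := by
      intro q hqmem
      rw [Finset.mem_Ico] at hqmem
      have hcast : ((q : ℝ) + 1) ≤ z := by
        have : (q : ℝ) + 1 ≤ (m : ℝ) := by exact_mod_cast Nat.succ_le_of_lt hqmem.2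
        linarith
      have := my_term_le z q hqmem.1 hcast
      simpa [hH, Nat.cast_add, Nat.cast_one] using this
    have htel : ∑ q ∈ Finset.Ico 1 m, (H (q + 1) - H q) = H m - H 1 := by
      rw [Finset.sum_Ico_eq_sum_range]
      have h := Finset.sum_range_sub (fun i => H (i + 1)) (m - 1)
      have hm' : m - 1 + 1 = m := by omega
      calc ∑ i ∈ Finset.range (m - 1), (H (1 + i + 1) - H (1 + i))
          = ∑ i ∈ Finset.range (m - 1), (H (i + 1 + 1) - H (i + 1)) := by
            apply Finset.sum_congr rfl; intro i _; rw [add_comm 1 i]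
        _ = H (m - 1 + 1) - H (0 + 1) := h
        _ = H m - H 1 := by rw [hm']
    have hHm : H m ≤ 1 := by
      have hlogm : 0 ≤ Real.log (z / m) := Real.log_nonneg (by
        rw [le_div_iff₀ (by linarith)]; linarith)
      rw [hH]
      apply div_le_one_of_le₀ (by linarith) (by linarith)
    have hH1 : 0 ≤ H 1 := by
      rw [hH]
      simp only [Nat.cast_one, div_one]
      have : 0 ≤ Real.log z := Real.log_nonneg (by linarith)
      positivity
    have hsum1 : ∑ q ∈ Finset.Ico 1 m, 1 / ((q : ℝ) * (max 1 (Real.log (z / q))) ^ 2)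
        ≤ 8 := by
      calc ∑ q ∈ Finset.Ico 1 m, 1 / ((q : ℝ) * (max 1 (Real.log (z / q))) ^ 2)
          ≤ ∑ q ∈ Finset.Ico 1 m, 8 * (H (q + 1) - H q) := Finset.sum_le_sum hstep
        _ = 8 * (H m - H 1) := by rw [← Finset.mul_sum, htel]
        _ ≤ 8 := by nlinarith
    have hlast : 1 / ((m : ℝ) * (max 1 (Real.log (z / m))) ^ 2) ≤ 1 := by
      apply div_le_one_of_le₀ _ (by positivity)
      have h1 : (1 : ℝ) ≤ max 1 (Real.log (z / m)) := le_max_left _ _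
      nlinarith
    linarith

lemma my_tail (g : ℕ → ℂ)
    (hg : Summable (fun q : ℕ => ‖g (q + 1)‖ ^ 2 / (Nat.totient (q + 1) : ℝ)))
    (δ : ℝ) (hδ : 0 < δ) :
    ∃ Q : ℕ, 1 ≤ Q ∧ ∀ n : ℕ,
      ∑ q ∈ Finset.Ico Q n, ‖g q‖ ^ 2 / (Nat.totient q : ℝ) ≤ δ := by
  have htail := tendsto_sum_nat_add (fun q : ℕ => ‖g (q + 1)‖ ^ 2 / (Nat.totient (q + 1) : ℝ))
  have hev : ∀ᶠ i in atTop,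
      (∑' k, ‖g (k + i + 1)‖ ^ 2 / (Nat.totient (k + i + 1) : ℝ)) < δ :=
    htail.eventually (gt_mem_nhds hδ)
  obtain ⟨i, hi⟩ := hev.exists
  refine ⟨i + 1, by omega, fun n => ?_⟩
  have hsummable : Summable (fun k : ℕ => ‖g (i + 1 + k)‖ ^ 2 / (Nat.totient (i + 1 + k) : ℝ)) := by
    have h := (summable_nat_add_iff i).mpr hg
    exact h.congr fun k => by rw [show k + i + 1 = i + 1 + k from by omega]
  rw [Finset.sum_Ico_eq_sum_range]
  calc ∑ k ∈ Finset.range (n - (i + 1)), ‖g (i + 1 + k)‖ ^ 2 / (Nat.totient (i + 1 + k) : ℝ)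
      ≤ ∑' k, ‖g (i + 1 + k)‖ ^ 2 / (Nat.totient (i + 1 + k) : ℝ) :=
        Summable.sum_le_tsum _ (fun k _ => by positivity) hsummable
    _ = ∑' k, ‖g (k + i + 1)‖ ^ 2 / (Nat.totient (k + i + 1) : ℝ) :=
        tsum_congr fun k => by rw [show i + 1 + k = k + i + 1 from by omega]
    _ ≤ δ := hi.le

theorem weighted_sum_tendsto_zero (g : ℕ → ℂ)
    (hg : Summable (fun q : ℕ => ‖g (q + 1)‖ ^ 2 / (Nat.totient (q + 1) : ℝ))) :
    Tendsto
      (fun z : ℝ => ∑ q ∈ Finset.Ioo 0 ⌈z⌉₊,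
        ‖g q‖ / ((q : ℝ) * max 1 (Real.log (z / (q : ℝ)))))
      atTop (nhds 0) := by
  rw [Metric.tendsto_nhds]
  intro ε hε
  obtain ⟨Q, hQ1, hQtail⟩ := my_tail g hg (ε ^ 2 / 40) (by positivity)
  set M := ∑ q ∈ Finset.Ico 1 Q, ‖g q‖ with hM
  have hM0 : 0 ≤ M := Finset.sum_nonneg fun q _ => norm_nonneg _
  set t : ℝ := 20 / ε with ht
  have ht0 : 0 < t := by positivity
  filter_upwards [eventually_ge_atTop ((Q : ℝ) * Real.exp (4 * (M + 1) / ε))] with z hz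
  have hexp1 : (1 : ℝ) ≤ Real.exp (4 * (M + 1) / ε) := Real.one_le_exp (by positivity)
  have hQ0R : (0 : ℝ) < Q := by exact_mod_cast hQ1
  have hQR : (Q : ℝ) ≤ z := by nlinarith
  have hz0 : (0 : ℝ) < z := lt_of_lt_of_le hQ0R hQR
  have hQn : Q ≤ ⌈z⌉₊ := by
    calc Q = ⌈(Q : ℝ)⌉₊ := (Nat.ceil_natCast Q).symm
      _ ≤ ⌈z⌉₊ := Nat.ceil_mono hQR
  set n := ⌈z⌉₊ with hn
  have hsum0 : 0 ≤ ∑ q ∈ Finset.Ioo 0 n, ‖g q‖ / ((q : ℝ) * max 1 (Real.log (z / q))) := by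
    apply Finset.sum_nonneg
    intro q _
    have h1 : (1 : ℝ) ≤ max 1 (Real.log (z / q)) := le_max_left _ _
    apply div_nonneg (norm_nonneg _)
    have : (0 : ℝ) ≤ q := Nat.cast_nonneg q
    nlinarith
  rw [Real.dist_eq, sub_zero, abs_of_nonneg hsum0]
  have hIoo : Finset.Ioo 0 n = Finset.Ico 1 n := by
    ext x; simp only [Finset.mem_Ioo, Finset.mem_Ico]; omega
  rw [hIoo, ← Finset.sum_Ico_consecutive _ hQ1 hQn]
  -- Part A
  have hA : ∑ q ∈ Finset.Ico 1 Q, ‖g q‖ / ((q : ℝ) * max 1 (Real.log (z / q))) ≤ ε / 4 := by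
    have hbound : ∀ q ∈ Finset.Ico 1 Q,
        ‖g q‖ / ((q : ℝ) * max 1 (Real.log (z / q))) ≤ ‖g q‖ * (ε / (4 * (M + 1))) := by
      intro q hq
      rw [Finset.mem_Ico] at hq
      have hq1 : (1 : ℝ) ≤ q := by exact_mod_cast hq.1
      have hqQ : (q : ℝ) ≤ Q := by exact_mod_cast hq.2.le
      have hzQ : Real.exp (4 * (M + 1) / ε) ≤ z / Q := by
        rw [le_div_iff₀ hQ0R]; linarith
      have hlogQ : 4 * (M + 1) / ε ≤ Real.log (z / Q) := by
        rw [Real.le_log_iff_exp_le (by positivity)]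
        exact hzQ
      have hmono : Real.log (z / (Q : ℝ)) ≤ Real.log (z / q) := by
        apply Real.log_le_log (by positivity)
        apply div_le_div_of_nonneg_left hz0.le (by linarith) hqQ
      have hden : 4 * (M + 1) / ε ≤ max 1 (Real.log (z / q)) :=
        le_trans (le_trans hlogQ hmono) (le_max_right _ _)
      have hden0 : (0 : ℝ) < 4 * (M + 1) / ε := by positivity
      have h1max : (1 : ℝ) ≤ max 1 (Real.log (z / q)) := le_max_left _ _
      have hdenle : 4 * (M + 1) / ε ≤ (q : ℝ) * max 1 (Real.log (z / q)) := by
        nlinarith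
      have hstep : ‖g q‖ / ((q : ℝ) * max 1 (Real.log (z / q)))
          ≤ ‖g q‖ / (4 * (M + 1) / ε) :=
        div_le_div_of_nonneg_left (norm_nonneg _) hden0 hdenle
      refine hstep.trans (le_of_eq ?_)
      rw [div_div_eq_mul_div, mul_div_assoc]
    calc ∑ q ∈ Finset.Ico 1 Q, ‖g q‖ / ((q : ℝ) * max 1 (Real.log (z / q)))
        ≤ ∑ q ∈ Finset.Ico 1 Q, ‖g q‖ * (ε / (4 * (M + 1))) := Finset.sum_le_sum hbound
      _ = M * (ε / (4 * (M + 1))) := by rw [← Finset.sum_mul]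
      _ ≤ (M + 1) * (ε / (4 * (M + 1))) := by
          have : (0:ℝ) ≤ ε / (4 * (M + 1)) := by positivity
          nlinarith
      _ = ε / 4 := by field_simp
  -- Part B
  have hB : ∑ q ∈ Finset.Ico Q n, ‖g q‖ / ((q : ℝ) * max 1 (Real.log (z / q)))
      ≤ ε / 4 + ε / 4 := by
    have hB1 : ∀ q ∈ Finset.Ico Q n,
        ‖g q‖ / ((q : ℝ) * max 1 (Real.log (z / q)))
          ≤ t / 2 * (‖g q‖ ^ 2 / (Nat.totient q : ℝ))
            + 1 / (2 * t) * (1 / ((q : ℝ) * (max 1 (Real.log (z / q))) ^ 2)) := by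
      intro q hq
      rw [Finset.mem_Ico] at hq
      have hq1 : 1 ≤ q := le_trans hQ1 hq.1
      have hq1R : (1 : ℝ) ≤ q := by exact_mod_cast hq1
      have hphi : 0 < Nat.totient q := Nat.totient_pos.mpr (by omega)
      have hphiR : (0 : ℝ) < Nat.totient q := by exact_mod_cast hphi
      have hphiq : (Nat.totient q : ℝ) ≤ q := by exact_mod_cast Nat.totient_le q
      exact my_amgm t ‖g q‖ (Nat.totient q) q (max 1 (Real.log (z / q))) ht0
        (norm_nonneg _) hphiR hq1R (le_max_left _ _) hphiq
    have hharm : ∑ q ∈ Finset.Ico Q n, 1 / ((q : ℝ) * (max 1 (Real.log (z / q))) ^ 2) ≤ 10 := by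
      have hsub : Finset.Ico Q n ⊆ Finset.Ico 1 n := by
        intro x hx; rw [Finset.mem_Ico] at hx ⊢; omega
      have hnn : ∀ q ∈ Finset.Ico 1 n, q ∉ Finset.Ico Q n →
          0 ≤ 1 / ((q : ℝ) * (max 1 (Real.log (z / q))) ^ 2) := by
        intro q _ _
        have h1 : (1 : ℝ) ≤ max 1 (Real.log (z / q)) := le_max_left _ _
        have h2 : (0 : ℝ) ≤ q := Nat.cast_nonneg q
        positivity
      calc ∑ q ∈ Finset.Ico Q n, 1 / ((q : ℝ) * (max 1 (Real.log (z / q))) ^ 2)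
          ≤ ∑ q ∈ Finset.Ico 1 n, 1 / ((q : ℝ) * (max 1 (Real.log (z / q))) ^ 2) :=
            Finset.sum_le_sum_of_subset_of_nonneg hsub hnn
        _ ≤ 10 := by rw [← hIoo]; exact my_harmonic_bound z
    have htails := hQtail n
    calc ∑ q ∈ Finset.Ico Q n, ‖g q‖ / ((q : ℝ) * max 1 (Real.log (z / q)))
        ≤ ∑ q ∈ Finset.Ico Q n, (t / 2 * (‖g q‖ ^ 2 / (Nat.totient q : ℝ))
            + 1 / (2 * t) * (1 / ((q : ℝ) * (max 1 (Real.log (z / q))) ^ 2))) :=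
          Finset.sum_le_sum hB1
      _ = t / 2 * ∑ q ∈ Finset.Ico Q n, ‖g q‖ ^ 2 / (Nat.totient q : ℝ)
            + 1 / (2 * t) * ∑ q ∈ Finset.Ico Q n, 1 / ((q : ℝ) * (max 1 (Real.log (z / q))) ^ 2) := by
          rw [Finset.sum_add_distrib, Finset.mul_sum, Finset.mul_sum]
      _ ≤ t / 2 * (ε ^ 2 / 40) + 1 / (2 * t) * 10 := by
          apply add_le_add
          · exact mul_le_mul_of_nonneg_left htails (by positivity)
          · exact mul_le_mul_of_nonneg_left hharm (by positivity)
      _ = ε / 4 + ε / 4 := by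
          rw [ht]
          field_simp
          ring
  linarith
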